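/- Let d ≥ 1, n ≥ 3, and let A ∈ ℤ^{d×d} be a copy matrix with A_{a,b} = 1 for some a ≠ b in {1,…,d}. Let A' = diag(A, I_n) ∈ ℤ^{(d+n)×(d+n)}, and for distinct s, t ∈ {d+1,…,d+n} let B_{s,t} = P_π·A'·P_{π⁻¹} where π is the permutation (b s)(a t). Then: (1) for every v ∈ ℤ^{d+n}, (B_{s,t}·v)(t) = v(s) and (B_{s,t}·v)(u) = v(u) for every u ∈ {d+1,…,d+n} \ {s,t}; and (2) for distinct x, y, z ∈ {d+1,…,d+n}, setting F_{x,y} = B_{z,x}·B_{x,y}·B_{y,z}, for every v ∈ ℤ^{d+n}: (F_{x,y}·v)(x) = v(y), (F_{x,y}·v)(y) = v(x), and (F_{x,y}·v)(u) = v(u) for every u ∈ {d+1,…,d+n} \ {x,y,z}. -/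

import Mathlib

/-- The permutation matrix of a permutation `σ`: its `(i, j)` entry is `1` iff `i = σ j`. -/
def permMat {m : ℕ} (σ : Equiv.Perm (Fin m)) : Matrix (Fin m) (Fin m) ℤ :=
  Matrix.of fun i j => if i = σ j then 1 else 0

/-- `extMat A n` is the block-diagonal matrix `diag(A, I_n)`. -/
def extMat {k : ℕ} (A : Matrix (Fin k) (Fin k) ℤ) (n : ℕ) :
    Matrix (Fin (k + n)) (Fin (k + n)) ℤ :=
  Matrix.reindex finSumFinEquiv finSumFinEquiv
    (Matrix.fromBlocks A 0 0 (1 : Matrix (Fin n) (Fin n) ℤ))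

/-- Conjugation of a matrix by a permutation: `σ(M) = P_σ · M · P_{σ⁻¹}`. -/
def conjMat {m : ℕ} (σ : Equiv.Perm (Fin m)) (M : Matrix (Fin m) (Fin m) ℤ) :
    Matrix (Fin m) (Fin m) ℤ :=
  permMat σ * M * permMat σ⁻¹

/-- A square integer matrix is a *copy* matrix if all its entries lie in `{0, 1}`
and each of its rows contains at most one nonzero entry. -/
def IsCopy {k : ℕ} (A : Matrix (Fin k) (Fin k) ℤ) : Prop :=
  (∀ i j, A i j = 0 ∨ A i j = 1) ∧
  ∀ i j₁ j₂, A i j₁ ≠ 0 → A i j₂ ≠ 0 → j₁ = j₂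

/-- `Bmat A a b s t = P_π · diag(A, I_n) · P_{π⁻¹}` where `π = (b s)(a t)`. -/
def Bmat {d n : ℕ} (A : Matrix (Fin d) (Fin d) ℤ) (a b : Fin d)
    (s t : Fin (d + n)) : Matrix (Fin (d + n)) (Fin (d + n)) ℤ :=
  conjMat (Equiv.swap (Fin.castAdd n b) s * Equiv.swap (Fin.castAdd n a) t) (extMat A n)

lemma permMat_mulVec {m : ℕ} (σ : Equiv.Perm (Fin m)) (w : Fin m → ℤ) (i : Fin m) :
    (permMat σ).mulVec w i = w (σ⁻¹ i) := by
  have key : ∀ j : Fin m, (if i = σ j then (1:ℤ) else 0) * w j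
      = if σ⁻¹ i = j then w j else 0 := by
    intro j
    by_cases h : i = σ j
    · simp [h]
    · have h' : σ⁻¹ i ≠ j := fun hh => h (by rw [← hh]; simp)
      rw [if_neg h, if_neg h', zero_mul]
  calc (permMat σ).mulVec w i = ∑ j, (if i = σ j then (1:ℤ) else 0) * w j := by
        simp [permMat, Matrix.mulVec, dotProduct]
    _ = ∑ j, if σ⁻¹ i = j then w j else 0 := Finset.sum_congr rfl fun j _ => key j
    _ = w (σ⁻¹ i) := by simp

lemma conjMat_mulVec {m : ℕ} (σ : Equiv.Perm (Fin m)) (M : Matrix (Fin m) (Fin m) ℤ)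
    (v : Fin m → ℤ) (i : Fin m) :
    (conjMat σ M).mulVec v i = M.mulVec (fun j => v (σ j)) (σ⁻¹ i) := by
  unfold conjMat
  rw [← Matrix.mulVec_mulVec, ← Matrix.mulVec_mulVec, permMat_mulVec]
  congr 1
  ext j
  rw [permMat_mulVec]
  simp

lemma extMat_mulVec_high {d n : ℕ} (A : Matrix (Fin d) (Fin d) ℤ)
    (w : Fin (d + n) → ℤ) (i : Fin (d + n)) (hi : d ≤ i.val) :
    (extMat A n).mulVec w i = w i := by
  obtain ⟨j, rfl⟩ : ∃ j : Fin n, i = Fin.natAdd d j :=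
    ⟨⟨i.val - d, by omega⟩, by apply Fin.ext; simp; omega⟩
  unfold extMat
  rw [Matrix.reindex_apply, Matrix.submatrix_mulVec_equiv, Function.comp_apply,
    Matrix.fromBlocks_mulVec]
  simp

lemma extMat_mulVec_a {d n : ℕ} (A : Matrix (Fin d) (Fin d) ℤ) (hA : IsCopy A)
    (a b : Fin d) (hAab : A a b = 1) (w : Fin (d + n) → ℤ) :
    (extMat A n).mulVec w (Fin.castAdd n a) = w (Fin.castAdd n b) := by
  have hrow : ∀ j, A a j = if j = b then 1 else 0 := by
    intro j
    by_cases h : j = b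
    · simp [h, hAab]
    · simp only [h, if_false]
      rcases hA.1 a j with h0 | h1
      · exact h0
      · exact absurd (hA.2 a j b (by simp [h1]) (by simp [hAab])) h
  unfold extMat
  rw [Matrix.reindex_apply, Matrix.submatrix_mulVec_equiv, Function.comp_apply]
  simp only [finSumFinEquiv_symm_apply_castAdd, Matrix.fromBlocks_mulVec, Sum.elim_inl,
    Pi.add_apply, Matrix.zero_mulVec, Pi.zero_apply, add_zero]
  calc A.mulVec ((w ∘ ⇑finSumFinEquiv) ∘ Sum.inl) a
      = ∑ j, A a j * w (Fin.castAdd n j) := by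
        simp [Matrix.mulVec, dotProduct]
    _ = ∑ j, (if j = b then (1:ℤ) else 0) * w (Fin.castAdd n j) :=
        Finset.sum_congr rfl fun j _ => by rw [hrow]
    _ = w (Fin.castAdd n b) := by
        simp only [ite_mul, one_mul, zero_mul]
        rw [Finset.sum_ite_eq' Finset.univ b]
        simp

lemma castAdd_ne {d n : ℕ} (c : Fin d) {u : Fin (d + n)} (hu : d ≤ u.val) :
    Fin.castAdd n c ≠ u := by
  intro h
  have := congrArg Fin.val h
  simp at this
  omega

lemma Bmat_apply_t {d n : ℕ} {A : Matrix (Fin d) (Fin d) ℤ} (hA : IsCopy A)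
    {a b : Fin d} (hab : a ≠ b) (hAab : A a b = 1)
    {s t : Fin (d + n)} (hs : d ≤ s.val) (ht : d ≤ t.val) (hst : s ≠ t)
    (v : Fin (d + n) → ℤ) :
    (Bmat A a b s t).mulVec v t = v s := by
  have hat : Fin.castAdd n a ≠ t := castAdd_ne a ht
  have hbt : Fin.castAdd n b ≠ t := castAdd_ne b ht
  have hbs : Fin.castAdd n b ≠ s := castAdd_ne b hs
  have hba : Fin.castAdd n b ≠ Fin.castAdd n a := by
    simpa [Fin.castAdd] using fun h => hab (Fin.castAdd_injective d n h).symm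
  rw [Bmat, conjMat_mulVec]
  have hinv : (Equiv.swap (Fin.castAdd n b) s * Equiv.swap (Fin.castAdd n a) t)⁻¹ t
      = Fin.castAdd n a := by
    rw [mul_inv_rev, Equiv.swap_inv, Equiv.swap_inv, Equiv.Perm.mul_apply,
      Equiv.swap_apply_of_ne_of_ne hbt.symm hst.symm, Equiv.swap_apply_right]
  rw [hinv, extMat_mulVec_a A hA a b hAab]
  simp [Equiv.Perm.mul_apply, Equiv.swap_apply_of_ne_of_ne hba hbt]

lemma Bmat_apply_u {d n : ℕ} {A : Matrix (Fin d) (Fin d) ℤ}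
    {a b : Fin d} {s t : Fin (d + n)}
    {u : Fin (d + n)} (hu : d ≤ u.val) (hus : u ≠ s) (hut : u ≠ t)
    (v : Fin (d + n) → ℤ) :
    (Bmat A a b s t).mulVec v u = v u := by
  have hau : Fin.castAdd n a ≠ u := castAdd_ne a hu
  have hbu : Fin.castAdd n b ≠ u := castAdd_ne b hu
  rw [Bmat, conjMat_mulVec]
  have hinv : (Equiv.swap (Fin.castAdd n b) s * Equiv.swap (Fin.castAdd n a) t)⁻¹ u = u := by
    rw [mul_inv_rev, Equiv.swap_inv, Equiv.swap_inv, Equiv.Perm.mul_apply,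
      Equiv.swap_apply_of_ne_of_ne hbu.symm hus,
      Equiv.swap_apply_of_ne_of_ne hau.symm hut]
  rw [hinv, extMat_mulVec_high A _ u hu]
  simp [Equiv.Perm.mul_apply,
    Equiv.swap_apply_of_ne_of_ne hau.symm hut,
    Equiv.swap_apply_of_ne_of_ne hbu.symm hus]

theorem copy_swap {d n : ℕ} (hd : 0 < d) (hn : 3 ≤ n)
    (A : Matrix (Fin d) (Fin d) ℤ) (hA : IsCopy A)
    (a b : Fin d) (hab : a ≠ b) (hAab : A a b = 1) :
    (∀ s t : Fin (d + n), d ≤ s.val → d ≤ t.val → s ≠ t →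
      ∀ v : Fin (d + n) → ℤ,
        ((Bmat A a b s t).mulVec v) t = v s ∧
        ∀ u : Fin (d + n), d ≤ u.val → u ≠ s → u ≠ t →
          ((Bmat A a b s t).mulVec v) u = v u) ∧
    (∀ x y z : Fin (d + n), d ≤ x.val → d ≤ y.val → d ≤ z.val →
      x ≠ y → x ≠ z → y ≠ z →
      ∀ v : Fin (d + n) → ℤ,
        ((Bmat A a b z x * Bmat A a b x y * Bmat A a b y z).mulVec v) x = v y ∧
        ((Bmat A a b z x * Bmat A a b x y * Bmat A a b y z).mulVec v) y = v x ∧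
        ∀ u : Fin (d + n), d ≤ u.val → u ≠ x → u ≠ y → u ≠ z →
          ((Bmat A a b z x * Bmat A a b x y * Bmat A a b y z).mulVec v) u = v u) := by
  constructor
  · intro s t hs ht hst v
    exact ⟨Bmat_apply_t hA hab hAab hs ht hst v,
      fun u hu hus hut => Bmat_apply_u hu hus hut v⟩
  · intro x y z hx hy hz hxy hxz hyz v
    have key : ∀ w : Fin (d + n) → ℤ,
        (Bmat A a b z x * Bmat A a b x y * Bmat A a b y z).mulVec w
        = (Bmat A a b z x).mulVec ((Bmat A a b x y).mulVec ((Bmat A a b y z).mulVec w)) := by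
      intro w
      rw [Matrix.mulVec_mulVec, Matrix.mulVec_mulVec]
    rw [key]
    refine ⟨?_, ?_, ?_⟩
    · rw [Bmat_apply_t hA hab hAab hz hx hxz.symm,
        Bmat_apply_u hz (Ne.symm hxz) (Ne.symm hyz),
        Bmat_apply_t hA hab hAab hy hz hyz]
    · rw [Bmat_apply_u hy hyz hxy.symm,
        Bmat_apply_t hA hab hAab hx hy hxy,
        Bmat_apply_u hx hxy hxz]
    · intro u hu hux huy huz
      rw [Bmat_apply_u hu huz hux, Bmat_apply_u hu hux huy, Bmat_apply_u hu huy huz]
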